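/- If X_m has the right intersection condition (i.e., every right ideal meeting C(P) for each P ∈ X_m also meets V_m = ∩_{P∈X_m} C(P)), then g ⊆ v, where g = {right ideals I : Kdim(R/I) < m} and v = {right ideals I : I ∩ V_m ≠ ∅}. -/
import Mathlib


set_option linter.unusedVariables false

/-- `devLE k A` : the deviation (in the Gabriel–Rentschler sense) of the
poset `A` is `≤ k` (for `k : ℕ`).  `devLE 0 A` says every descending chain
eventually stabilizes (DCC), and `devLE (k+1) A` says that in any descending
chain all but finitely many of the factor intervals have deviation `≤ k`. -/
def devLE : ℕ → (A : Type*) → [inst : Preorder A] → Prop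
  | 0, A, _ => ∀ f : ℕ → A, Antitone f → ∃ N, ∀ i, N ≤ i → f (i + 1) = f i
  | (k+1), A, _ => ∀ f : ℕ → A, Antitone f →
      ∃ N, ∀ i, N ≤ i → devLE k (Set.Icc (f (i + 1)) (f i))

/-- The Gabriel–Rentschler Krull dimension of the right `R`-module `M`
(a module over `Rᵐᵒᵖ`) is `≤ k` : the deviation of its submodule lattice is `≤ k`. -/
def kdimLE (R M : Type*) [Ring R] [AddCommGroup M] [Module Rᵐᵒᵖ M] (k : ℕ) : Prop :=
  devLE k (Submodule Rᵐᵒᵖ M)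

/-- `c` is a regular element of `R` (neither a left nor a right zero divisor). -/
def regElem (R : Type*) [Ring R] (c : R) : Prop :=
  (∀ x : R, c * x = 0 → x = 0) ∧ (∀ x : R, x * c = 0 → x = 0)

/-- `C_m = {c ∈ R | Kdim(R/cR) < m}` (for `0 < m`, `Kdim < m` is `Kdim ≤ m-1`). -/
def rCm (R : Type*) [Ring R] (m : ℕ) : Set R :=
  {c | kdimLE R (R ⧸ Submodule.span Rᵐᵒᵖ ({c} : Set R)) (m - 1)}

/-- The m-Gabriel filter `g = {right ideals I | Kdim(R/I) < m}`. -/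
def gFilt (R : Type*) [Ring R] (m : ℕ) : Set (Submodule Rᵐᵒᵖ R) :=
  {I | kdimLE R (R ⧸ I) (m - 1)}

/-- A right ideal `P` is a (two-sided) prime ideal of `R`. -/
def isTwoSidedPrime (R : Type*) [Ring R] (P : Submodule Rᵐᵒᵖ R) : Prop :=
  (∀ a ∈ P, ∀ r : R, r * a ∈ P) ∧ P ≠ ⊤ ∧
    ∀ a b : R, (∀ r : R, a * r * b ∈ P) → a ∈ P ∨ b ∈ P

/-- `c ∈ C(P)` : `c` is regular modulo `P`. -/
def regModP (R : Type*) [Ring R] (P : Submodule Rᵐᵒᵖ R) (c : R) : Prop :=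
  ∀ x : R, (c * x ∈ P → x ∈ P) ∧ (x * c ∈ P → x ∈ P)

/-- `X_m` : the set of (two-sided) prime ideals `P` with `Kdim(R/P) = m`. -/
def xSet (R : Type*) [Ring R] (m : ℕ) : Set (Submodule Rᵐᵒᵖ R) :=
  {P | isTwoSidedPrime R P ∧ kdimLE R (R ⧸ P) m ∧ ¬ kdimLE R (R ⧸ P) (m - 1)}

/-- `V_m = ⋂_{P ∈ X_m} C(P)`. -/
def vSet (R : Type*) [Ring R] (m : ℕ) : Set R :=
  {v | ∀ P ∈ xSet R m, regModP R P v}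

/-- Left multiplication by `a` as a right-module (`Rᵐᵒᵖ`-module) endomorphism of `R`. -/
def lmulHom (R : Type*) [Ring R] (a : R) : R →ₗ[Rᵐᵒᵖ] R where
  toFun x := a * x
  map_add' x y := mul_add a x y
  map_smul' r x := by
    simp [MulOpposite.smul_eq_mul_unop, mul_assoc]

/-- `Q` is a classical right quotient ring of `R` via `f : R →+* Q` :
`f` is injective, regular elements of `R` become units in `Q`, and every
element of `Q` is a right fraction `f a * (f s)⁻¹`. -/
def isRightQuotientRing (R Q : Type*) [Ring R] [Ring Q] (f : R →+* Q) : Prop :=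
  Function.Injective f ∧ (∀ s : R, regElem R s → IsUnit (f s)) ∧
    ∀ q : Q, ∃ a s : R, regElem R s ∧ q * f s = f a

/-- `R^e = {q ∈ Q | qJ ⊆ R for some J in the m-Gabriel filter}`, as a subset of `Q`. -/
def reSet (R Q : Type*) [Ring R] [Ring Q] (f : R →+* Q) (m : ℕ) : Set Q :=
  {q | ∃ J ∈ gFilt R m, ∀ j ∈ J, ∃ r : R, q * f j = f r}

/-- The extension `A·R^e` of a set `A ⊆ R` : the additive subgroup of `Q`
generated by products `f a * q` with `a ∈ A`, `q ∈ R^e` (a right ideal of `R^e`). -/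
def extSet (R Q : Type*) [Ring R] [Ring Q] (f : R →+* Q) (m : ℕ) (A : Set R) : Set Q :=
  (AddSubgroup.closure {x : Q | ∃ a ∈ A, ∃ q ∈ reSet R Q f m, x = f a * q} : Set Q)

/-- The right `R`-module structure on `Q` induced by `f : R →+* Q`. -/
def qMod (R Q : Type*) [Ring R] [Ring Q] (f : R →+* Q) : Module Rᵐᵒᵖ Q :=
  Module.compHom Q (RingHom.op f)

theorem devLE_of_map : ∀ (k : ℕ) (A B : Type*) [PartialOrder A] [Preorder B]
    (e : A → B) (hmono : Monotone e) (hrefl : ∀ x y, e x ≤ e y → x ≤ y),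
    devLE k B → devLE k A := by
  intro k
  induction k with
  | zero =>
    intro A B _ _ e hmono hrefl hB f hf
    obtain ⟨N, hN⟩ := hB (e ∘ f) (hmono.comp_antitone hf)
    exact ⟨N, fun i hi => le_antisymm (hf (Nat.le_succ i))
      (hrefl _ _ (ge_of_eq (hN i hi)))⟩
  | succ k ih =>
    intro A B _ _ e hmono hrefl hB f hf
    obtain ⟨N, hN⟩ := hB (e ∘ f) (hmono.comp_antitone hf)
    refine ⟨N, fun i hi => ?_⟩
    refine ih _ _ (fun x => (⟨e x.1, hmono x.2.1, hmono x.2.2⟩ :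
      Set.Icc (e (f (i+1))) (e (f i)))) (fun x y hxy => hmono hxy)
      (fun x y hxy => hrefl _ _ hxy) (hN i hi)

theorem devLE_of_subsingleton : ∀ (k : ℕ) (A : Type*) [Preorder A] [Subsingleton A],
    devLE k A := by
  intro k
  induction k with
  | zero => intro A _ _ f _; exact ⟨0, fun i _ => Subsingleton.elim _ _⟩
  | succ k ih =>
    intro A _ _ f _
    exact ⟨0, fun i _ => ih _⟩

theorem devLE_Icc_Icc {L : Type*} [PartialOrder L] {p q : L} (k : ℕ) (u v : Set.Icc p q)
    (h : devLE k (Set.Icc u v)) : devLE k (Set.Icc u.1 v.1) :=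
  devLE_of_map k _ _
    (fun x => (⟨⟨x.1, le_trans u.2.1 x.2.1, le_trans x.2.2 v.2.2⟩, x.2.1, x.2.2⟩ :
      Set.Icc u v))
    (fun x y hxy => hxy) (fun x y hxy => hxy) h

theorem devLE_Icc_val {L : Type*} [PartialOrder L] {p q : L} (k : ℕ) (u v : Set.Icc p q)
    (h : devLE k (Set.Icc u.1 v.1)) : devLE k (Set.Icc u v) :=
  devLE_of_map k _ _
    (fun x => (⟨x.1.1, x.2.1, x.2.2⟩ : Set.Icc u.1 v.1))
    (fun x y hxy => hxy) (fun x y hxy => hxy) h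

theorem modular_cancel {L : Type*} [Lattice L] [IsModularLattice L] {x y n : L}
    (hxy : x ≤ y) (hinf : y ⊓ n ≤ x ⊓ n) (hsup : y ⊔ n ≤ x ⊔ n) : y = x := by
  refine le_antisymm ?_ hxy
  calc y = y ⊓ (y ⊔ n) := by simp
  _ ≤ y ⊓ (x ⊔ n) := inf_le_inf_left _ hsup
  _ = (x ⊔ n) ⊓ y := by rw [inf_comm]
  _ = x ⊔ n ⊓ y := sup_inf_assoc_of_le n hxy
  _ ≤ x := sup_le le_rfl (le_trans (le_trans (le_of_eq (inf_comm n y)) hinf) inf_le_left)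

theorem devLE_rel_ext : ∀ (k : ℕ) (L : Type*) [Lattice L] [IsModularLattice L] (a b n : L),
    devLE k (Set.Icc (a ⊓ n) (b ⊓ n)) → devLE k (Set.Icc (a ⊔ n) (b ⊔ n)) →
    devLE k (Set.Icc a b) := by
  intro k
  induction k with
  | zero =>
    intro L _ _ a b n h1 h2 f hf
    obtain ⟨N₁, hN₁⟩ := h1 (fun i => (⟨(f i).1 ⊓ n,
        inf_le_inf_right n (f i).2.1, inf_le_inf_right n (f i).2.2⟩ :
          Set.Icc (a ⊓ n) (b ⊓ n)))
      (fun i j hij => inf_le_inf_right n (show ((f j : L)) ≤ (f i : L) from hf hij))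
    obtain ⟨N₂, hN₂⟩ := h2 (fun i => (⟨(f i).1 ⊔ n,
        sup_le_sup_right (f i).2.1 n, sup_le_sup_right (f i).2.2 n⟩ :
          Set.Icc (a ⊔ n) (b ⊔ n)))
      (fun i j hij => sup_le_sup_right (show ((f j : L)) ≤ (f i : L) from hf hij) n)
    refine ⟨max N₁ N₂, fun i hi => ?_⟩
    have e1 := congrArg Subtype.val (hN₁ i (le_trans (le_max_left _ _) hi))
    have e2 := congrArg Subtype.val (hN₂ i (le_trans (le_max_right _ _) hi))
    exact (Subtype.ext (modular_cancel
      (show ((f (i+1) : L)) ≤ (f i : L) from hf (Nat.le_succ i))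
      (le_of_eq (e1 : (f (i+1) : L) ⊓ n = (f i : L) ⊓ n).symm)
      (le_of_eq (e2 : (f (i+1) : L) ⊔ n = (f i : L) ⊔ n).symm))).symm
  | succ k ih =>
    intro L _ _ a b n h1 h2 f hf
    obtain ⟨N₁, hN₁⟩ := h1 (fun i => (⟨(f i).1 ⊓ n,
        inf_le_inf_right n (f i).2.1, inf_le_inf_right n (f i).2.2⟩ :
          Set.Icc (a ⊓ n) (b ⊓ n)))
      (fun i j hij => inf_le_inf_right n (show ((f j : L)) ≤ (f i : L) from hf hij))
    obtain ⟨N₂, hN₂⟩ := h2 (fun i => (⟨(f i).1 ⊔ n,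
        sup_le_sup_right (f i).2.1 n, sup_le_sup_right (f i).2.2 n⟩ :
          Set.Icc (a ⊔ n) (b ⊔ n)))
      (fun i j hij => sup_le_sup_right (show ((f j : L)) ≤ (f i : L) from hf hij) n)
    refine ⟨max N₁ N₂, fun i hi => ?_⟩
    have e1 : devLE k (Set.Icc ((f (i+1) : L) ⊓ n) ((f i : L) ⊓ n)) :=
      devLE_Icc_Icc k _ _ (hN₁ i (le_trans (le_max_left _ _) hi))
    have e2 : devLE k (Set.Icc ((f (i+1) : L) ⊔ n) ((f i : L) ⊔ n)) :=
      devLE_Icc_Icc k _ _ (hN₂ i (le_trans (le_max_right _ _) hi))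
    exact devLE_Icc_val k _ _ (ih L _ _ n e1 e2)

section ModuleDev

variable {A : Type*} [Ring A] {M N : Type*} [AddCommGroup M] [Module A M]
  [AddCommGroup N] [Module A N]

theorem devLE_submodule_of_injective (k : ℕ) (φ : M →ₗ[A] N) (hφ : Function.Injective φ)
    (h : devLE k (Submodule A N)) : devLE k (Submodule A M) :=
  devLE_of_map k _ _ (Submodule.map φ) (fun _ _ hpq => Submodule.map_mono hpq)
    (fun p q hpq => (Submodule.map_le_map_iff_of_injective hφ p q).mp hpq) h

theorem devLE_submodule_of_surjective (k : ℕ) (φ : M →ₗ[A] N) (hφ : Function.Surjective φ)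
    (h : devLE k (Submodule A M)) : devLE k (Submodule A N) :=
  devLE_of_map k _ _ (Submodule.comap φ) (fun _ _ hpq => Submodule.comap_mono hpq)
    (fun p q hpq => (Submodule.comap_le_comap_iff_of_surjective hφ).mp hpq) h

theorem devLE_submodule_of_subsingleton (k : ℕ) [Subsingleton M] :
    devLE k (Submodule A M) := by
  haveI : Subsingleton (Submodule A M) :=
    ⟨fun p q => by
      ext x
      rw [Subsingleton.elim x 0]
      simp⟩
  exact devLE_of_subsingleton k _

theorem devLE_of_Icc_bot_top {L : Type*} [Lattice L] [BoundedOrder L] (k : ℕ)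
    (h : devLE k (Set.Icc (⊥ : L) ⊤)) : devLE k L :=
  devLE_of_map k _ _ (fun x => (⟨x, bot_le, le_top⟩ : Set.Icc (⊥ : L) ⊤))
    (fun _ _ hxy => hxy) (fun _ _ hxy => hxy) h

theorem devLE_submodule_ext (k : ℕ) (N' : Submodule A M)
    (h1 : devLE k (Submodule A N')) (h2 : devLE k (Submodule A (M ⧸ N'))) :
    devLE k (Submodule A M) := by
  have hb : ∀ X : Set.Icc ((⊥ : Submodule A M) ⊓ N') ((⊤ : Submodule A M) ⊓ N'),
      X.1 ≤ N' := fun X => le_trans X.2.2 inf_le_right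
  have ht : ∀ X : Set.Icc ((⊥ : Submodule A M) ⊔ N') ((⊤ : Submodule A M) ⊔ N'),
      N' ≤ X.1 := fun X => le_trans le_sup_right X.2.1
  refine devLE_of_Icc_bot_top k (devLE_rel_ext k (Submodule A M) ⊥ ⊤ N' ?_ ?_)
  · refine devLE_of_map k _ _ (fun X => Submodule.comap N'.subtype X.1)
      (fun X Y hXY => Submodule.comap_mono hXY) (fun X Y hXY => ?_) h1
    have h2' : N' ⊓ X.1 ≤ N' ⊓ Y.1 := by
      have h3 := Submodule.map_mono (f := N'.subtype) hXY
      rwa [Submodule.map_comap_subtype, Submodule.map_comap_subtype] at h3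
    have hx : N' ⊓ X.1 = X.1 := inf_eq_right.mpr (hb X)
    have hy : N' ⊓ Y.1 = Y.1 := inf_eq_right.mpr (hb Y)
    exact Subtype.coe_le_coe.mp (le_trans (le_of_eq hx.symm) (le_trans h2' (le_of_eq hy)))
  · refine devLE_of_map k _ _ (fun X => Submodule.map N'.mkQ X.1)
      (fun X Y hXY => Submodule.map_mono hXY) (fun X Y hXY => ?_) h2
    have h2' : N' ⊔ X.1 ≤ N' ⊔ Y.1 := by
      have h3 := Submodule.comap_mono (f := N'.mkQ) hXY
      rwa [Submodule.comap_map_mkQ, Submodule.comap_map_mkQ] at h3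
    have hx : N' ⊔ X.1 = X.1 := sup_eq_right.mpr (ht X)
    have hy : N' ⊔ Y.1 = Y.1 := sup_eq_right.mpr (ht Y)
    exact Subtype.coe_le_coe.mp (le_trans (le_of_eq hx.symm) (le_trans h2' (le_of_eq hy)))

theorem devLE_submodule_sup (k : ℕ) (p q : Submodule A M)
    (h1 : devLE k (Submodule A p)) (h2 : devLE k (Submodule A q)) :
    devLE k (Submodule A ↥(p ⊔ q)) := by
  set W := p ⊔ q with hW
  refine devLE_submodule_ext k (Submodule.comap W.subtype p) ?_ ?_
  · refine devLE_submodule_of_injective k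
      (LinearMap.codRestrict p (W.subtype.comp (Submodule.comap W.subtype p).subtype)
        (fun c => c.2)) (fun x y hxy => ?_) h1
    have := congrArg Subtype.val hxy
    exact Subtype.ext (Subtype.ext this)
  · refine devLE_submodule_of_surjective k
      ((Submodule.comap W.subtype p).mkQ.comp (Submodule.inclusion le_sup_right)) ?_ h2
    intro z
    induction z using Quotient.ind with
    | _ x =>
      obtain ⟨a, ha, b, hb, hab⟩ := Submodule.mem_sup.mp (hW ▸ x.2 : x.1 ∈ p ⊔ q)
      refine ⟨⟨b, hb⟩, ?_⟩
      show Submodule.Quotient.mk _ = Submodule.Quotient.mk x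
      rw [Submodule.Quotient.eq]
      refine Submodule.mem_comap.mpr ?_
      show ((Submodule.inclusion (le_sup_right : q ≤ W) ⟨b, hb⟩ : W) : M) - x.1 ∈ p
      have : ((Submodule.inclusion (le_sup_right : q ≤ W) ⟨b, hb⟩ : W) : M) = b := rfl
      rw [this, ← hab]
      simpa using neg_mem ha

end ModuleDev

section RingSide

variable {R : Type} [Ring R]

/-- left multiplication by `c` on the right module `R ⧸ P`. -/
def lq (P : Submodule Rᵐᵒᵖ R) (hP1 : ∀ a ∈ P, ∀ r : R, r * a ∈ P) (c : R) :
    (R ⧸ P) →ₗ[Rᵐᵒᵖ] (R ⧸ P) :=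
  Submodule.mapQ P P (lmulHom R c) (fun a ha => hP1 a ha c)

variable (P : Submodule Rᵐᵒᵖ R) (hP1 : ∀ a ∈ P, ∀ r : R, r * a ∈ P)

theorem lq_mk (c x : R) :
    lq P hP1 c (Submodule.Quotient.mk x) = Submodule.Quotient.mk (c * x) :=
  Submodule.mapQ_apply _ _ _ _

theorem op_smul_mk (r x : R) :
    (MulOpposite.op r) • (Submodule.Quotient.mk x : R ⧸ P) = Submodule.Quotient.mk (x * r) := by
  rw [← Submodule.Quotient.mk_smul]
  rw [MulOpposite.smul_eq_mul_unop]
  rfl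

theorem lq_comp_eq (c d : R) :
    lq P hP1 (c * d) = (lq P hP1 c).comp (lq P hP1 d) := by
  refine LinearMap.ext fun y => ?_
  obtain ⟨x, rfl⟩ := Submodule.Quotient.mk_surjective P y
  rw [lq_mk, LinearMap.comp_apply, lq_mk, lq_mk, mul_assoc]

theorem lq_comp (c d : R) (y : R ⧸ P) :
    lq P hP1 (c * d) y = lq P hP1 c (lq P hP1 d y) := by
  rw [lq_comp_eq]; rfl

theorem lq_add (c d : R) (y : R ⧸ P) :
    lq P hP1 (c + d) y = lq P hP1 c y + lq P hP1 d y := by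
  obtain ⟨x, rfl⟩ := Submodule.Quotient.mk_surjective P y
  rw [lq_mk, lq_mk, lq_mk, ← Submodule.Quotient.mk_add, add_mul]

theorem lq_zero (c : R) (hc : c ∈ P) (y : R ⧸ P) : lq P hP1 c y = 0 := by
  obtain ⟨x, rfl⟩ := Submodule.Quotient.mk_surjective P y
  rw [lq_mk]
  rw [Submodule.Quotient.mk_eq_zero]
  have : c * x = (MulOpposite.op x) • c := by
    rw [MulOpposite.smul_eq_mul_unop]; rfl
  rw [this]
  exact Submodule.smul_mem P _ hc

theorem mem_ker_lq_iff (c x : R) :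
    (Submodule.Quotient.mk x : R ⧸ P) ∈ LinearMap.ker (lq P hP1 c) ↔ c * x ∈ P := by
  rw [LinearMap.mem_ker, lq_mk, Submodule.Quotient.mk_eq_zero]

theorem range_lq_le (c : R) (X : Submodule Rᵐᵒᵖ (R ⧸ P))
    (hc : Submodule.Quotient.mk c ∈ X) : LinearMap.range (lq P hP1 c) ≤ X := by
  rintro y ⟨z, rfl⟩
  obtain ⟨x, rfl⟩ := Submodule.Quotient.mk_surjective P z
  rw [lq_mk]
  have : (Submodule.Quotient.mk (c * x) : R ⧸ P) =
      (MulOpposite.op x) • (Submodule.Quotient.mk c : R ⧸ P) := by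
    rw [op_smul_mk]
  rw [this]
  exact Submodule.smul_mem X _ hc

theorem pow_shift (x y : R) : ∀ k, (x*y)^(k+1) = x * ((y*x)^k * y)
  | 0 => by simp [mul_assoc]
  | k+1 => by
    rw [pow_succ, pow_shift x y k, pow_succ]
    simp [mul_assoc]

include hP1 in
theorem stepB [IsNoetherian Rᵐᵒᵖ R]
    (hP2 : ∀ a b : R, (∀ r : R, a * r * b ∈ P) → a ∈ P ∨ b ∈ P)
    (X : Submodule Rᵐᵒᵖ (R ⧸ P)) (hX : X ≠ ⊥) :
    ∃ c : R, (Submodule.Quotient.mk c : R ⧸ P) ∈ X ∧ ∀ k : ℕ, c^(k+1) ∉ P := by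
  classical
  by_contra hcon
  push_neg at hcon
  obtain ⟨y, hyX, hy0⟩ := (Submodule.ne_bot_iff X).mp hX
  obtain ⟨a, rfl⟩ := Submodule.Quotient.mk_surjective P y
  have haP : a ∉ P := fun h => hy0 ((Submodule.Quotient.mk_eq_zero P).mpr h)
  have H : ∀ r : R, ∃ k : ℕ, (r*a)^(k+1) ∈ P := by
    intro r
    obtain ⟨k, hk⟩ := hcon (a*r) (op_smul_mk P r a ▸ Submodule.smul_mem X _ hyX)
    refine ⟨k+1, ?_⟩
    rw [pow_shift r a (k+1)]
    refine hP1 _ ?_ r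
    have h2 : (a*r)^(k+1) * a = (MulOpposite.op a) • ((a*r)^(k+1)) := by
      rw [MulOpposite.smul_eq_mul_unop]; rfl
    rw [h2]
    exact Submodule.smul_mem P _ hk
  have hne : Set.Nonempty
      {K : Submodule Rᵐᵒᵖ (R ⧸ P) | ∃ r : R, r * a ∉ P ∧ K = LinearMap.ker (lq P hP1 (r * a))} :=
    ⟨LinearMap.ker (lq P hP1 (1 * a)), 1, by rwa [one_mul], rfl⟩
  obtain ⟨K₀, hK₀mem, hK₀max⟩ := (set_has_maximal_iff_noetherian.mpr inferInstance) _ hne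
  obtain ⟨r₀, hr₀, rfl⟩ := hK₀mem
  have hbrb : ∀ r : R, (r₀ * a) * (r * (r₀ * a)) ∈ P := by
    intro r
    by_cases hrb : r * (r₀ * a) ∈ P
    · exact hP1 _ hrb (r₀ * a)
    · have hra : (r * r₀) * a = r * (r₀ * a) := by rw [mul_assoc]
      have hex : ∃ k, (r * (r₀ * a))^(k+1) ∈ P := by
        obtain ⟨k, hk⟩ := H (r * r₀)
        exact ⟨k, by rwa [hra] at hk⟩
      have hjP : (r * (r₀ * a))^(Nat.find hex + 1) ∈ P := Nat.find_spec hex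
      have hj0 : Nat.find hex ≠ 0 := by
        intro h0
        rw [h0] at hjP
        simp only [zero_add, pow_one] at hjP
        exact hrb hjP
      obtain ⟨j', hj'⟩ : ∃ j', Nat.find hex = j' + 1 :=
        ⟨Nat.find hex - 1, (Nat.succ_pred_eq_of_pos (Nat.pos_of_ne_zero hj0)).symm⟩
      have hdP : (r * (r₀ * a))^(j'+1) ∉ P := Nat.find_min hex (by omega)
      have hker1 : LinearMap.ker (lq P hP1 (r₀ * a)) ≤
          LinearMap.ker (lq P hP1 (r * (r₀ * a))) := by
        intro y hy
        rw [LinearMap.mem_ker] at hy ⊢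
        rw [lq_comp P hP1 r (r₀ * a) y, hy, map_zero]
      have hker2 : LinearMap.ker (lq P hP1 (r * (r₀ * a))) ≤
          LinearMap.ker (lq P hP1 ((r * (r₀ * a))^(j'+1))) := by
        intro y hy
        rw [LinearMap.mem_ker] at hy ⊢
        rw [pow_succ, lq_comp P hP1, hy, map_zero]
      have hform : (r * (r₀ * a))^(j') * (r * r₀) * a = (r * (r₀ * a))^(j'+1) := by
        rw [mul_assoc, hra, ← pow_succ]
      have hmem : LinearMap.ker (lq P hP1 ((r * (r₀ * a))^(j'+1))) ∈
          {K : Submodule Rᵐᵒᵖ (R ⧸ P) | ∃ r : R, r * a ∉ P ∧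
            K = LinearMap.ker (lq P hP1 (r * a))} := by
        refine ⟨(r * (r₀ * a))^(j') * (r * r₀), ?_, ?_⟩
        · rw [hform]; exact hdP
        · rw [hform]
      have heq : LinearMap.ker (lq P hP1 (r₀ * a)) =
          LinearMap.ker (lq P hP1 ((r * (r₀ * a))^(j'+1))) := by
        rcases (le_trans hker1 hker2).lt_or_eq with hlt | he
        · exact absurd hlt (hK₀max _ hmem)
        · exact he
      have hmk : (Submodule.Quotient.mk (r * (r₀ * a)) : R ⧸ P) ∈
          LinearMap.ker (lq P hP1 ((r * (r₀ * a))^(j'+1))) := by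
        rw [mem_ker_lq_iff, ← pow_succ, ← hj']
        exact hjP
      rw [← heq, mem_ker_lq_iff] at hmk
      exact hmk
  have hbP : r₀ * a ∈ P := by
    rcases hP2 (r₀ * a) (r₀ * a)
      (fun r => by rw [mul_assoc]; exact hbrb r) with h | h <;> exact h
  exact hr₀ hbP

include hP1 in
theorem stepC [IsNoetherian Rᵐᵒᵖ R]
    (hP2 : ∀ a b : R, (∀ r : R, a * r * b ∈ P) → a ∈ P ∨ b ∈ P)
    (X : Submodule Rᵐᵒᵖ (R ⧸ P)) (hX : X ≠ ⊥) :
    ∃ b : R, (Submodule.Quotient.mk b : R ⧸ P) ∈ X ∧ b * b ∉ P ∧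
      LinearMap.range (lq P hP1 b) ⊓ LinearMap.ker (lq P hP1 b) = ⊥ := by
  obtain ⟨c, hcX, hcnil⟩ := stepB P hP1 hP2 X hX
  have hmono : Monotone (fun k => LinearMap.ker (lq P hP1 (c^(k+1)))) := by
    refine monotone_nat_of_le_succ (fun k => ?_)
    intro y hy
    rw [LinearMap.mem_ker] at hy ⊢
    rw [show c^(k+1+1) = c * c^(k+1) from (pow_succ' c (k+1)), lq_comp P hP1, hy, map_zero]
  obtain ⟨n₀, hn₀⟩ := monotone_stabilizes_iff_noetherian.mpr inferInstance
    ⟨fun k => LinearMap.ker (lq P hP1 (c^(k+1))), hmono⟩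
  have hpow : c^(n₀+1) * c^(n₀+1) = c^((n₀+n₀+1)+1) := by
    rw [← pow_add]
    congr 1
    omega
  refine ⟨c^(n₀+1), ?_, ?_, ?_⟩
  · rw [show c^(n₀+1) = c * c^(n₀) from pow_succ' c n₀, ← op_smul_mk P (c^(n₀)) c]
    exact Submodule.smul_mem X _ hcX
  · rw [hpow]
    exact hcnil (n₀+n₀+1)
  · refine (Submodule.eq_bot_iff _).mpr ?_
    rintro y hy
    rw [Submodule.mem_inf] at hy
    obtain ⟨hyr, hyk⟩ := hy
    obtain ⟨z, rfl⟩ := LinearMap.mem_range.mp hyr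
    rw [LinearMap.mem_ker, ← lq_comp P hP1, hpow] at hyk
    have hz : z ∈ LinearMap.ker (lq P hP1 (c^(n₀+1))) := by
      have heq : LinearMap.ker (lq P hP1 (c^(n₀+1))) =
          LinearMap.ker (lq P hP1 (c^((n₀+n₀+1)+1))) := hn₀ (n₀+n₀+1) (by omega)
      have : z ∈ LinearMap.ker (lq P hP1 (c^((n₀+n₀+1)+1))) := hyk
      rw [← heq] at this
      exact this
    rw [LinearMap.mem_ker] at hz
    exact hz

include hP1 in
theorem stepD [IsNoetherian Rᵐᵒᵖ R]
    (hP2 : ∀ a b : R, (∀ r : R, a * r * b ∈ P) → a ∈ P ∨ b ∈ P)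
    (X : Submodule Rᵐᵒᵖ (R ⧸ P)) :
    ∃ c : R, (Submodule.Quotient.mk c : R ⧸ P) ∈ X ∧
      X ⊓ LinearMap.ker (lq P hP1 c) = ⊥ := by
  have hbotmem : (⊥ : Submodule Rᵐᵒᵖ (R ⧸ P)) ∈
      {U : Submodule Rᵐᵒᵖ (R ⧸ P) | ∃ c : R, (Submodule.Quotient.mk c : R ⧸ P) ∈ X ∧
        LinearMap.range (lq P hP1 c) ⊓ LinearMap.ker (lq P hP1 c) = ⊥ ∧
        U ⊓ LinearMap.ker (lq P hP1 c) = ⊥ ∧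
        LinearMap.range (lq P hP1 c) ≤ U ∧ U ≤ X} := by
    have hr0 : LinearMap.range (lq P hP1 0) = ⊥ := by
      refine (Submodule.eq_bot_iff _).mpr ?_
      rintro y hy
      obtain ⟨z, rfl⟩ := LinearMap.mem_range.mp hy
      exact lq_zero P hP1 0 (zero_mem P) z
    refine ⟨0, by rw [show ((Submodule.Quotient.mk 0 : R ⧸ P)) = 0 from rfl]; exact zero_mem X,
      ?_, ?_, ?_, ?_⟩
    · rw [hr0, bot_inf_eq]
    · rw [bot_inf_eq]
    · rw [hr0]
    · exact bot_le
  obtain ⟨U₀, hU₀mem, hU₀max⟩ := (set_has_maximal_iff_noetherian.mpr inferInstance) _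
    ⟨⊥, hbotmem⟩
  obtain ⟨c, hcX, hrk, hUk, hrU, hUX⟩ := hU₀mem
  refine ⟨c, hcX, ?_⟩
  by_contra hne
  obtain ⟨b, hbX', hbb, hbrk⟩ := stepC P hP1 hP2 (X ⊓ LinearMap.ker (lq P hP1 c)) hne
  obtain ⟨hbX, hbk⟩ := Submodule.mem_inf.mp hbX'
  have hcb : c * b ∈ P := (mem_ker_lq_iff P hP1 c b).mp hbk
  have hrb_le : LinearMap.range (lq P hP1 b) ≤ X ⊓ LinearMap.ker (lq P hP1 c) :=
    range_lq_le P hP1 b _ hbX'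
  have hker_eq : LinearMap.ker (lq P hP1 (c + b)) =
      LinearMap.ker (lq P hP1 c) ⊓ LinearMap.ker (lq P hP1 b) := by
    refine le_antisymm ?_ ?_
    · intro y hy
      rw [LinearMap.mem_ker, lq_add P hP1] at hy
      have h1 : lq P hP1 c y = - lq P hP1 b y := by
        rw [add_eq_zero_iff_eq_neg] at hy
        exact hy
      have h2 : lq P hP1 b y ∈ LinearMap.ker (lq P hP1 c) :=
        (Submodule.mem_inf.mp (hrb_le (LinearMap.mem_range_self _ y))).2
      have h3 : lq P hP1 c y ∈ LinearMap.range (lq P hP1 c) ⊓ LinearMap.ker (lq P hP1 c) :=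
        Submodule.mem_inf.mpr ⟨LinearMap.mem_range_self _ y,
          by rw [h1]; exact neg_mem h2⟩
      have h4 : lq P hP1 c y = 0 := by rw [hrk] at h3; simpa using h3
      have h5 : lq P hP1 b y = 0 := by rw [h4, zero_add] at hy; exact hy
      exact Submodule.mem_inf.mpr ⟨LinearMap.mem_ker.mpr h4, LinearMap.mem_ker.mpr h5⟩
    · intro y hy
      obtain ⟨hy1, hy2⟩ := Submodule.mem_inf.mp hy
      rw [LinearMap.mem_ker] at hy1 hy2 ⊢
      rw [lq_add P hP1, hy1, hy2, add_zero]
  have hrk' : LinearMap.range (lq P hP1 (c+b)) ⊓ LinearMap.ker (lq P hP1 (c+b)) = ⊥ := by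
    refine (Submodule.eq_bot_iff _).mpr ?_
    rintro y hy
    obtain ⟨hyr, hyk⟩ := Submodule.mem_inf.mp hy
    obtain ⟨z, rfl⟩ := LinearMap.mem_range.mp hyr
    obtain ⟨hz1, hz2⟩ := Submodule.mem_inf.mp (hker_eq ▸ hyk)
    have e0 : lq P hP1 c (lq P hP1 (c+b) z) = 0 := LinearMap.mem_ker.mp hz1
    have e1 : lq P hP1 (c+b) z = lq P hP1 c z + lq P hP1 b z := lq_add P hP1 c b z
    have e2 : lq P hP1 c (lq P hP1 b z) = 0 := by
      rw [← lq_comp P hP1]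
      exact lq_zero P hP1 _ hcb z
    have e3 : lq P hP1 c (lq P hP1 c z) = 0 := by
      rw [e1, map_add, e2, add_zero] at e0
      exact e0
    have e4 : lq P hP1 c z ∈ LinearMap.range (lq P hP1 c) ⊓ LinearMap.ker (lq P hP1 c) :=
      Submodule.mem_inf.mpr ⟨LinearMap.mem_range_self _ z, LinearMap.mem_ker.mpr e3⟩
    have e5 : lq P hP1 c z = 0 := by rw [hrk] at e4; simpa using e4
    have e6 : lq P hP1 (c+b) z = lq P hP1 b z := by rw [e1, e5, zero_add]
    have e7 : lq P hP1 b z ∈ LinearMap.ker (lq P hP1 b) := e6 ▸ hz2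
    have e8 : lq P hP1 b z ∈ LinearMap.range (lq P hP1 b) ⊓ LinearMap.ker (lq P hP1 b) :=
      Submodule.mem_inf.mpr ⟨LinearMap.mem_range_self _ z, e7⟩
    rw [hbrk] at e8
    rw [e6]
    simpa using e8
  have hUk' : (U₀ ⊔ LinearMap.range (lq P hP1 b)) ⊓ LinearMap.ker (lq P hP1 (c+b)) = ⊥ := by
    refine (Submodule.eq_bot_iff _).mpr ?_
    rintro y hy
    obtain ⟨hyU, hyk⟩ := Submodule.mem_inf.mp hy
    obtain ⟨hz1, hz2⟩ := Submodule.mem_inf.mp (hker_eq ▸ hyk)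
    obtain ⟨u, huU, v, hvr, rfl⟩ := Submodule.mem_sup.mp hyU
    have hv_kc : v ∈ LinearMap.ker (lq P hP1 c) := (Submodule.mem_inf.mp (hrb_le hvr)).2
    have hu_kc : u ∈ LinearMap.ker (lq P hP1 c) := by
      have h := Submodule.sub_mem _ hz1 hv_kc
      simpa using h
    have hu0 : u = 0 := by
      have h : u ∈ U₀ ⊓ LinearMap.ker (lq P hP1 c) := Submodule.mem_inf.mpr ⟨huU, hu_kc⟩
      rw [hUk] at h
      simpa using h
    have hv_kb : v ∈ LinearMap.ker (lq P hP1 b) := by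
      rw [hu0, zero_add] at hz2
      exact hz2
    have hv0 : v ∈ LinearMap.range (lq P hP1 b) ⊓ LinearMap.ker (lq P hP1 b) :=
      Submodule.mem_inf.mpr ⟨hvr, hv_kb⟩
    rw [hbrk] at hv0
    rw [hu0, zero_add]
    simpa using hv0
  have hrU' : LinearMap.range (lq P hP1 (c+b)) ≤ U₀ ⊔ LinearMap.range (lq P hP1 b) := by
    rintro y hyr
    obtain ⟨z, rfl⟩ := LinearMap.mem_range.mp hyr
    rw [lq_add P hP1]
    exact Submodule.add_mem _ (Submodule.mem_sup_left (hrU (LinearMap.mem_range_self _ z)))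
      (Submodule.mem_sup_right (LinearMap.mem_range_self _ z))
  have hmem' : U₀ ⊔ LinearMap.range (lq P hP1 b) ∈
      {U : Submodule Rᵐᵒᵖ (R ⧸ P) | ∃ c : R, (Submodule.Quotient.mk c : R ⧸ P) ∈ X ∧
        LinearMap.range (lq P hP1 c) ⊓ LinearMap.ker (lq P hP1 c) = ⊥ ∧
        U ⊓ LinearMap.ker (lq P hP1 c) = ⊥ ∧
        LinearMap.range (lq P hP1 c) ≤ U ∧ U ≤ X} := by
    refine ⟨c + b, ?_, hrk', hUk', hrU', sup_le hUX (le_trans hrb_le inf_le_left)⟩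
    have : (Submodule.Quotient.mk (c + b) : R ⧸ P) =
        Submodule.Quotient.mk c + Submodule.Quotient.mk b := rfl
    rw [this]
    exact Submodule.add_mem X hcX hbX
  have hge : LinearMap.range (lq P hP1 b) ≤ U₀ := by
    rcases (le_sup_left : U₀ ≤ U₀ ⊔ LinearMap.range (lq P hP1 b)).lt_or_eq with hlt | he
    · exact absurd hlt (hU₀max _ hmem')
    · rw [he]
      exact le_sup_right
  have hmkb : (Submodule.Quotient.mk b : R ⧸ P) ∈ LinearMap.range (lq P hP1 b) := by
    refine ⟨Submodule.Quotient.mk 1, ?_⟩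
    rw [lq_mk, mul_one]
  have hb0 : (Submodule.Quotient.mk b : R ⧸ P) = 0 := by
    have h : (Submodule.Quotient.mk b : R ⧸ P) ∈ U₀ ⊓ LinearMap.ker (lq P hP1 c) :=
      Submodule.mem_inf.mpr ⟨hge hmkb, hbk⟩
    rw [hUk] at h
    simpa using h
  have hbP : b ∈ P := (Submodule.Quotient.mk_eq_zero P).mp hb0
  exact hbb (hP1 b hbP b)

include hP1 in
theorem stepE [IsNoetherian Rᵐᵒᵖ R]
    (hP2 : ∀ a b : R, (∀ r : R, a * r * b ∈ P) → a ∈ P ∨ b ∈ P) (k : ℕ)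
    (hPk : ¬ devLE k (Submodule Rᵐᵒᵖ (R ⧸ P)))
    (X : Submodule Rᵐᵒᵖ (R ⧸ P)) (hX : X ≠ ⊥)
    (hXdev : devLE k (Submodule Rᵐᵒᵖ ↥X)) : False := by
  obtain ⟨T, hTmem, hTmax⟩ := (set_has_maximal_iff_noetherian.mpr inferInstance)
    {Y : Submodule Rᵐᵒᵖ (R ⧸ P) | X ≤ Y ∧ devLE k (Submodule Rᵐᵒᵖ ↥Y)} ⟨X, le_rfl, hXdev⟩
  obtain ⟨hXT, hTdev⟩ := hTmem
  have hTS : ∀ r : R, Submodule.map (lq P hP1 r) T ≤ T := by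
    intro r
    have hrange : LinearMap.range ((lq P hP1 r).comp T.subtype) =
        Submodule.map (lq P hP1 r) T := by
      rw [LinearMap.range_comp, Submodule.range_subtype]
    have hdev2 : devLE k (Submodule Rᵐᵒᵖ ↥(Submodule.map (lq P hP1 r) T)) := by
      rw [← hrange]
      exact devLE_submodule_of_surjective k _
        (LinearMap.surjective_rangeRestrict ((lq P hP1 r).comp T.subtype)) hTdev
    have hsup : T ⊔ Submodule.map (lq P hP1 r) T ∈
        {Y : Submodule Rᵐᵒᵖ (R ⧸ P) | X ≤ Y ∧ devLE k (Submodule Rᵐᵒᵖ ↥Y)} :=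
      ⟨le_trans hXT le_sup_left, devLE_submodule_sup k _ _ hTdev hdev2⟩
    rcases (le_sup_left : T ≤ T ⊔ Submodule.map (lq P hP1 r) T).lt_or_eq with hlt | he
    · exact absurd hlt (hTmax _ hsup)
    · exact le_trans le_sup_right he.symm.le
  obtain ⟨c, hcT, hTk⟩ := stepD P hP1 hP2 T
  have hrangeT : LinearMap.range (lq P hP1 c) ≤ T := range_lq_le P hP1 c T hcT
  have hMq : devLE k (Submodule Rᵐᵒᵖ ((R ⧸ P) ⧸ LinearMap.ker (lq P hP1 c))) := by
    have h1 : devLE k (Submodule Rᵐᵒᵖ ↥(LinearMap.range (lq P hP1 c))) :=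
      devLE_submodule_of_injective k (Submodule.inclusion hrangeT)
        (Submodule.inclusion_injective _) hTdev
    exact devLE_submodule_of_injective k ((lq P hP1 c).quotKerEquivRange).toLinearMap
      ((lq P hP1 c).quotKerEquivRange).injective h1
  have hBne : LinearMap.ker (lq P hP1 c) ≠ ⊥ := by
    intro hB0
    apply hPk
    refine devLE_submodule_ext k (LinearMap.ker (lq P hP1 c)) ?_ hMq
    rw [hB0]
    haveI : Subsingleton ↥(⊥ : Submodule Rᵐᵒᵖ (R ⧸ P)) :=
      ⟨fun a b => Subtype.ext (by
        rw [(Submodule.mem_bot _).mp a.2, (Submodule.mem_bot _).mp b.2])⟩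
    exact devLE_submodule_of_subsingleton k
  obtain ⟨y, hyB, hy0⟩ := (Submodule.ne_bot_iff _).mp hBne
  obtain ⟨x, rfl⟩ := Submodule.Quotient.mk_surjective P y
  have hxP : x ∉ P := fun h => hy0 ((Submodule.Quotient.mk_eq_zero P).mpr h)
  have hTne : T ≠ ⊥ := fun h => hX (le_bot_iff.mp (h ▸ hXT))
  obtain ⟨z, hzT, hz0⟩ := (Submodule.ne_bot_iff _).mp hTne
  obtain ⟨t, rfl⟩ := Submodule.Quotient.mk_surjective P z
  have htP : t ∉ P := fun h => hz0 ((Submodule.Quotient.mk_eq_zero P).mpr h)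
  have hall : ∀ r : R, x * r * t ∈ P := by
    intro r
    have hT' : (Submodule.Quotient.mk (x*r*t) : R ⧸ P) ∈ T := by
      have h : (Submodule.Quotient.mk (x*r*t) : R ⧸ P) =
          lq P hP1 (x*r) (Submodule.Quotient.mk t) := by rw [lq_mk]
      rw [h]
      exact hTS (x*r) (Submodule.mem_map_of_mem hzT)
    have hB' : (Submodule.Quotient.mk (x*r*t) : R ⧸ P) ∈ LinearMap.ker (lq P hP1 c) := by
      have h : (Submodule.Quotient.mk (x*r*t) : R ⧸ P) =
          (MulOpposite.op (r*t)) • (Submodule.Quotient.mk x : R ⧸ P) := by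
        rw [op_smul_mk]
        congr 1
        rw [mul_assoc]
      rw [h]
      exact Submodule.smul_mem _ _ hyB
    have hmem : (Submodule.Quotient.mk (x*r*t) : R ⧸ P) ∈
        T ⊓ LinearMap.ker (lq P hP1 c) := Submodule.mem_inf.mpr ⟨hT', hB'⟩
    rw [hTk] at hmem
    exact (Submodule.Quotient.mk_eq_zero P).mp (by simpa using hmem)
  rcases hP2 x t hall with h | h
  · exact hxP h
  · exact htP h

include hP1 in
theorem keyReg [IsNoetherian Rᵐᵒᵖ R]
    (hP2 : ∀ a b : R, (∀ r : R, a * r * b ∈ P) → a ∈ P ∨ b ∈ P)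
    (m : ℕ) (hm : 0 < m)
    (hPm : devLE m (Submodule Rᵐᵒᵖ (R ⧸ P)))
    (hPm' : ¬ devLE (m-1) (Submodule Rᵐᵒᵖ (R ⧸ P)))
    (I : Submodule Rᵐᵒᵖ R)
    (hI : devLE (m-1) (Submodule Rᵐᵒᵖ (R ⧸ I))) :
    ∃ t ∈ I, ∀ x : R, (t * x ∈ P → x ∈ P) ∧ (x * t ∈ P → x ∈ P) := by
  set J := I.map P.mkQ with hJ
  have hle : I ≤ LinearMap.ker (J.mkQ.comp P.mkQ) := by
    intro i hi
    rw [LinearMap.mem_ker, LinearMap.comp_apply, Submodule.mkQ_apply, Submodule.mkQ_apply,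
      Submodule.Quotient.mk_eq_zero]
    exact Submodule.mem_map_of_mem hi
  have hquot : devLE (m-1) (Submodule Rᵐᵒᵖ ((R ⧸ P) ⧸ J)) := by
    refine devLE_submodule_of_surjective (m-1) (Submodule.liftQ I (J.mkQ.comp P.mkQ) hle)
      ?_ hI
    intro w
    obtain ⟨v, rfl⟩ := Submodule.Quotient.mk_surjective J w
    obtain ⟨x, rfl⟩ := Submodule.Quotient.mk_surjective P v
    exact ⟨Submodule.Quotient.mk x, by rw [Submodule.liftQ_apply]; rfl⟩
  obtain ⟨c, hcJ, hJk⟩ := stepD P hP1 hP2 J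
  have hker0 : LinearMap.ker (lq P hP1 c) = ⊥ := by
    by_contra hne
    refine stepE P hP1 hP2 (m-1) hPm' (LinearMap.ker (lq P hP1 c)) hne ?_
    refine devLE_submodule_of_injective (m-1)
      (J.mkQ.comp (LinearMap.ker (lq P hP1 c)).subtype) ?_ hquot
    rw [← LinearMap.ker_eq_bot]
    refine (Submodule.eq_bot_iff _).mpr ?_
    intro u hu
    rw [LinearMap.mem_ker, LinearMap.comp_apply, Submodule.mkQ_apply,
      Submodule.Quotient.mk_eq_zero] at hu
    have h2 : (u : R ⧸ P) ∈ J ⊓ LinearMap.ker (lq P hP1 c) :=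
      Submodule.mem_inf.mpr ⟨hu, u.2⟩
    rw [hJk] at h2
    exact Subtype.ext (by simpa using h2)
  have hinjc : Function.Injective (lq P hP1 c) := LinearMap.ker_eq_bot.mp hker0
  have hone : ∀ y : R ⧸ P, lq P hP1 (c^0) y = y := by
    intro y
    obtain ⟨x, rfl⟩ := Submodule.Quotient.mk_surjective P y
    rw [pow_zero, lq_mk, one_mul]
  have hinjpow : ∀ i, Function.Injective (lq P hP1 (c^i)) := by
    intro i
    induction i with
    | zero => intro a b hab; rwa [hone, hone] at hab
    | succ i ih =>
      intro a b hab
      rw [pow_succ c i, lq_comp P hP1 (c^i) c a, lq_comp P hP1 (c^i) c b] at hab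
      exact hinjc (ih hab)
  have hanti : Antitone (fun i => LinearMap.range (lq P hP1 (c^i))) := by
    refine antitone_nat_of_succ_le (fun i => ?_)
    rintro y hy
    obtain ⟨z, rfl⟩ := LinearMap.mem_range.mp hy
    rw [pow_succ c i, lq_comp P hP1 (c^i) c]
    exact LinearMap.mem_range_self _ _
  have hPm2 : devLE ((m-1)+1) (Submodule Rᵐᵒᵖ (R ⧸ P)) := by
    have hmm : m - 1 + 1 = m := by omega
    rw [hmm]
    exact hPm
  obtain ⟨N, hN⟩ := hPm2 (fun i => LinearMap.range (lq P hP1 (c^i))) hanti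
  have hD : devLE (m-1) (Set.Icc (LinearMap.range (lq P hP1 (c^(N+1))))
      (LinearMap.range (lq P hP1 (c^N)))) := hN N le_rfl
  have hcompN : lq P hP1 (c^(N+1)) = (lq P hP1 (c^N)).comp (lq P hP1 c) := by
    rw [pow_succ c N, lq_comp_eq P hP1]
  have hmap1 : Submodule.map (lq P hP1 (c^N)) (LinearMap.range (lq P hP1 c)) =
      LinearMap.range (lq P hP1 (c^(N+1))) := by
    rw [hcompN, LinearMap.range_comp]
  have hmap0 : Submodule.map (lq P hP1 (c^N)) ⊤ = LinearMap.range (lq P hP1 (c^N)) := by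
    rw [Submodule.map_top, LinearMap.range_eq_map]
  have hIcc : devLE (m-1) (Set.Icc (LinearMap.range (lq P hP1 c))
      (⊤ : Submodule Rᵐᵒᵖ (R ⧸ P))) := by
    refine devLE_of_map (m-1) _ _
      (fun XX => (⟨Submodule.map (lq P hP1 (c^N)) XX.1,
        by rw [← hmap1]; exact Submodule.map_mono XX.2.1,
        by rw [← hmap0]; exact Submodule.map_mono XX.2.2⟩ :
          Set.Icc (LinearMap.range (lq P hP1 (c^(N+1)))) (LinearMap.range (lq P hP1 (c^N)))))
      (fun XX YY hXY => Submodule.map_mono hXY)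
      (fun XX YY hXY => (Submodule.map_le_map_iff_of_injective (hinjpow N) _ _).mp hXY) hD
  have hG : devLE (m-1) (Submodule Rᵐᵒᵖ ((R ⧸ P) ⧸ LinearMap.range (lq P hP1 c))) := by
    refine devLE_of_map (m-1) _ _
      (fun XX => (⟨Submodule.comap (LinearMap.range (lq P hP1 c)).mkQ XX,
        by intro w hw
           rw [Submodule.mem_comap, Submodule.mkQ_apply]
           rw [show (Submodule.Quotient.mk w : (R ⧸ P) ⧸ LinearMap.range (lq P hP1 c)) = 0 from
             (Submodule.Quotient.mk_eq_zero _).mpr hw]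
           exact XX.1.zero_mem,
        le_top⟩ :
          Set.Icc (LinearMap.range (lq P hP1 c)) (⊤ : Submodule Rᵐᵒᵖ (R ⧸ P))))
      (fun XX YY hXY => Submodule.comap_mono hXY)
      (fun XX YY hXY => (Submodule.comap_le_comap_iff_of_surjective
        (Submodule.mkQ_surjective _)).mp hXY) hIcc
  have hleft : ∀ x : R, x * c ∈ P → x ∈ P := by
    intro x hxc
    by_contra hxP
    have hY : LinearMap.range (lq P hP1 x) ≠ ⊥ := by
      refine (Submodule.ne_bot_iff _).mpr ⟨Submodule.Quotient.mk x,
        ⟨Submodule.Quotient.mk 1, by rw [lq_mk, mul_one]⟩, ?_⟩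
      intro h0
      exact hxP ((Submodule.Quotient.mk_eq_zero P).mp h0)
    have hle2 : LinearMap.range (lq P hP1 c) ≤
        Submodule.comap LinearMap.id (LinearMap.ker (lq P hP1 x)) := by
      rintro y hy
      obtain ⟨z, rfl⟩ := LinearMap.mem_range.mp hy
      simp only [Submodule.mem_comap, LinearMap.id_apply, LinearMap.mem_ker]
      rw [← lq_comp P hP1]
      exact lq_zero P hP1 _ hxc z
    have hsurj2 : Function.Surjective
        (Submodule.mapQ (LinearMap.range (lq P hP1 c)) (LinearMap.ker (lq P hP1 x))
          LinearMap.id hle2) := by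
      intro w
      obtain ⟨v, rfl⟩ := Submodule.Quotient.mk_surjective _ w
      exact ⟨Submodule.Quotient.mk v, by rw [Submodule.mapQ_apply]; rfl⟩
    have hYq : devLE (m-1) (Submodule Rᵐᵒᵖ ((R ⧸ P) ⧸ LinearMap.ker (lq P hP1 x))) :=
      devLE_submodule_of_surjective (m-1) _ hsurj2 hG
    have hYdev : devLE (m-1) (Submodule Rᵐᵒᵖ ↥(LinearMap.range (lq P hP1 x))) :=
      devLE_submodule_of_injective (m-1) ((lq P hP1 x).quotKerEquivRange).symm.toLinearMap
        ((lq P hP1 x).quotKerEquivRange).symm.injective hYq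
    exact stepE P hP1 hP2 (m-1) hPm' (LinearMap.range (lq P hP1 x)) hY hYdev
  obtain ⟨t, htI, ht⟩ := Submodule.mem_map.mp hcJ
  have htc : (Submodule.Quotient.mk t : R ⧸ P) = Submodule.Quotient.mk c := ht
  have hd : t - c ∈ P := (Submodule.Quotient.eq P).mp htc
  refine ⟨t, htI, fun x => ⟨?_, ?_⟩⟩
  · intro htx
    have h1 : t*x - c*x ∈ P := by
      rw [show t*x - c*x = (MulOpposite.op x) • (t - c) by
        rw [MulOpposite.smul_eq_mul_unop, MulOpposite.unop_op, sub_mul]]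
      exact Submodule.smul_mem P _ hd
    have h2 : c * x ∈ P := by
      have h3 := Submodule.sub_mem P htx h1
      rwa [sub_sub_cancel] at h3
    have h3 : (Submodule.Quotient.mk x : R ⧸ P) ∈ LinearMap.ker (lq P hP1 c) :=
      (mem_ker_lq_iff P hP1 c x).mpr h2
    rw [hker0] at h3
    exact (Submodule.Quotient.mk_eq_zero P).mp (by simpa using h3)
  · intro hxt
    have h1 : x*t - x*c ∈ P := by
      rw [show x*t - x*c = x*(t-c) from (mul_sub x t c).symm]
      exact hP1 _ hd x
    have h2 : x * c ∈ P := by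
      have h3 := Submodule.sub_mem P hxt h1
      rwa [sub_sub_cancel] at h3
    exact hleft x h2

end RingSide


theorem stmt6 (R : Type) [Ring R] [Nontrivial R] [IsNoetherian Rᵐᵒᵖ R]
    (hprime : ∀ a b : R, (∀ r : R, a * r * b = 0) → a = 0 ∨ b = 0)
    (n m : ℕ) (hm : 0 < m) (hmn : m < n)
    (hdim : kdimLE R R n ∧ ¬ kdimLE R R (n - 1))
    (hint : ∀ I : Submodule Rᵐᵒᵖ R,
      (∀ P ∈ xSet R m, ∃ t ∈ I, regModP R P t) → ∃ t ∈ I, t ∈ vSet R m) :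
    ∀ I ∈ gFilt R m, ∃ t ∈ I, t ∈ vSet R m := by
  intro I hI
  refine hint I ?_
  intro P hP
  obtain ⟨hPprime, hPm, hPm'⟩ := hP
  obtain ⟨t, htI, hreg⟩ := keyReg P hPprime.1 hPprime.2.2 m hm hPm hPm' I hI
  exact ⟨t, htI, hreg⟩
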